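/- Let P_k denote the normalized shifted Legendre polynomial of degree k on [0,1] and ξ₁ = 1/(2√3). Suppose Ā(τ,σ) = Σ_{i=0}^{N} Σ_{j=0}^{N} α_{(i,j)} P_i(τ) P_j(σ) with real coefficients α_{(i,j)}, and suppose Ā(τ,σ) − Ā(1−τ,1−σ) = τ − σ for all τ, σ ∈ [0,1]. Then α_{(0,1)} = −ξ₁/2, α_{(1,0)} = ξ₁/2, and α_{(i,j)} = 0 for every pair (i,j) with i + j odd and i + j > 1. -/

import Mathlib

open Set

noncomputable section

/-- The normalized shifted Legendre polynomial of degree `k` on `[0,1]`,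
given by the Rodrigues formula `P_k(x) = (√(2k+1)/k!) dᵏ/dxᵏ [(x² - x)ᵏ]`. -/
def legP (k : ℕ) (x : ℝ) : ℝ :=
  (Real.sqrt (2 * (k : ℝ) + 1) / (Nat.factorial k : ℝ)) *
    iteratedDeriv k (fun y : ℝ => (y ^ 2 - y) ^ k) x

/-- `ξ₁ = 1/(2√3)`. -/
def xi1 : ℝ := 1 / (2 * Real.sqrt 3)

namespace SymAux

open Polynomial

def Q (k : ℕ) : ℝ[X] :=
  C (Real.sqrt (2 * (k:ℝ) + 1) / (Nat.factorial k : ℝ)) *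
    derivative^[k] ((X ^ 2 - X) ^ k)

lemma iteratedDeriv_eval (k : ℕ) (p : ℝ[X]) :
    iteratedDeriv k (fun y => p.eval y) = fun y => (derivative^[k] p).eval y := by
  induction k generalizing p with
  | zero => simp
  | succ k ih =>
    rw [iteratedDeriv_succ', Function.iterate_succ_apply]
    have : deriv (fun y => p.eval y) = fun y => p.derivative.eval y := by
      funext y; exact Polynomial.deriv p
    rw [this, ih]

lemma legP_eq (k : ℕ) (x : ℝ) : legP k x = (Q k).eval x := by
  have h : (fun y : ℝ => (y ^ 2 - y) ^ k) = fun y => ((X ^ 2 - X : ℝ[X]) ^ k).eval y := by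
    funext y; simp
  rw [legP, h, iteratedDeriv_eval, Q, eval_mul, eval_C]

lemma monic_base (k : ℕ) : ((X ^ 2 - X : ℝ[X]) ^ k).Monic := by
  apply Polynomial.Monic.pow
  have : (X ^ 2 - X : ℝ[X]) = X ^ 2 - X := rfl
  apply Polynomial.monic_X_pow_sub (by simpa using Polynomial.degree_X_le)

lemma natDegree_base (k : ℕ) : ((X ^ 2 - X : ℝ[X]) ^ k).natDegree = 2 * k := by
  rw [natDegree_pow]
  have h2 : (X ^ 2 - X : ℝ[X]).natDegree = 2 := by
    compute_degree!
  rw [h2, mul_comm]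

lemma ck_pos (k : ℕ) : 0 < Real.sqrt (2 * (k:ℝ) + 1) / (Nat.factorial k : ℝ) := by
  apply div_pos (Real.sqrt_pos.2 (by positivity)) (by positivity)

lemma Q_coeff_self (k : ℕ) : (Q k).coeff k ≠ 0 := by
  rw [Q, coeff_C_mul, coeff_iterate_derivative]
  have h1 : ((X ^ 2 - X : ℝ[X]) ^ k).coeff (k + k) = 1 := by
    have := (monic_base k).leadingCoeff
    rwa [Polynomial.leadingCoeff, natDegree_base, two_mul] at this
  rw [h1]
  simp only [nsmul_eq_mul, mul_one]
  have h2 : (k + k).descFactorial k ≠ 0 := by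
    rw [Ne, Nat.descFactorial_eq_zero_iff_lt]; omega
  exact mul_ne_zero (ck_pos k).ne' (by exact_mod_cast h2)

lemma Q_coeff_gt (k m : ℕ) (h : k < m) : (Q k).coeff m = 0 := by
  rw [Q, coeff_C_mul, coeff_iterate_derivative]
  have h1 : ((X ^ 2 - X : ℝ[X]) ^ k).coeff (m + k) = 0 := by
    apply coeff_eq_zero_of_natDegree_lt
    rw [natDegree_base]; omega
  rw [h1]; simp

lemma indep (n : ℕ) (a : ℕ → ℝ)
    (h : ∑ i ∈ Finset.range n, C (a i) * Q i = 0) : ∀ i < n, a i = 0 := by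
  induction n with
  | zero => omega
  | succ n ih =>
    have hn : a n = 0 := by
      have hc := congrArg (fun p => Polynomial.coeff p n) h
      simp only [Polynomial.finset_sum_coeff, coeff_C_mul, coeff_zero] at hc
      rw [Finset.sum_range_succ] at hc
      have hz : ∀ i ∈ Finset.range n, a i * (Q i).coeff n = 0 := by
        intro i hi
        rw [Q_coeff_gt i n (Finset.mem_range.1 hi), mul_zero]
      rw [Finset.sum_eq_zero hz, zero_add] at hc
      exact (mul_eq_zero.1 hc).resolve_right (Q_coeff_self n)
    intro i hi
    rcases Nat.lt_succ_iff_lt_or_eq.1 hi with h' | h'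
    · have h2 : ∑ i ∈ Finset.range n, C (a i) * Q i = 0 := by
        rw [Finset.sum_range_succ, hn] at h
        simpa using h
      exact ih h2 i h'
    · rw [h']; exact hn

lemma extract {n : ℕ} {a b : ℕ → ℝ}
    (h : ∀ x ∈ Icc (0:ℝ) 1, ∑ i ∈ Finset.range n, a i * legP i x
        = ∑ i ∈ Finset.range n, b i * legP i x) :
    ∀ i < n, a i = b i := by
  have hp : (∑ i ∈ Finset.range n, C (a i) * Q i)
      = ∑ i ∈ Finset.range n, C (b i) * Q i := by
    apply Polynomial.eq_of_infinite_eval_eq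
    apply Set.Infinite.mono (s := Icc (0:ℝ) 1) _ (Set.Icc_infinite (by norm_num))
    intro x hx
    simp only [Set.mem_setOf_eq, eval_finset_sum, eval_mul, eval_C]
    have := h x hx
    simpa only [legP_eq] using this
  have h0 : ∑ i ∈ Finset.range n, C (a i - b i) * Q i = 0 := by
    simp only [map_sub, sub_mul, Finset.sum_sub_distrib, hp, sub_self]
  intro i hi
  have := indep n _ h0 i hi
  linarith

lemma legP_reflect (k : ℕ) (x : ℝ) : legP k (1 - x) = (-1) ^ k * legP k x := by
  rw [legP_eq, legP_eq, Q, eval_mul, eval_mul, eval_C, eval_C]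
  have hcomp : ((X ^ 2 - X : ℝ[X]) ^ k).comp (1 - X) = (X ^ 2 - X) ^ k := by
    rw [pow_comp]; congr 1; simp [sub_comp]; ring
  have h := iterate_derivative_comp_one_sub_X ((X ^ 2 - X : ℝ[X]) ^ k) k
  rw [hcomp] at h
  have he := congrArg (fun p => Polynomial.eval x p) h
  simp only [eval_mul, eval_pow, eval_neg, eval_one, eval_comp, eval_sub, eval_X] at he
  have he2 : Polynomial.eval (1 - x) (derivative^[k] ((X ^ 2 - X : ℝ[X]) ^ k))
      = (-1) ^ k * Polynomial.eval x (derivative^[k] ((X ^ 2 - X : ℝ[X]) ^ k)) := by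
    rw [he, ← mul_assoc, ← pow_add, Even.neg_one_pow ⟨k, rfl⟩, one_mul]
  rw [he2]; ring

lemma legP_zero (x : ℝ) : legP 0 x = 1 := by
  simp [legP, iteratedDeriv_zero]

lemma legP_one (x : ℝ) : legP 1 x = Real.sqrt 3 * (2 * x - 1) := by
  rw [legP_eq, Q]
  simp only [pow_one, Function.iterate_one, derivative_sub, derivative_X_pow, derivative_X,
    Nat.factorial_one, Nat.cast_one, div_one, eval_mul, eval_C, eval_sub, eval_mul, eval_X,
    eval_one]
  norm_num

lemma xi1_legP_one (x : ℝ) : xi1 * legP 1 x = x - 1/2 := by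
  rw [legP_one, xi1]
  have h3 : Real.sqrt 3 ≠ 0 := by positivity
  field_simp

end SymAux


/-- if `Ā(τ,σ) = Σ_{i=0}^N Σ_{j=0}^N α_{(i,j)} P_i(τ)P_j(σ)` satisfies
`Ā(τ,σ) - Ā(1-τ,1-σ) = τ - σ` on `[0,1]²`, then `α_{(0,1)} = -ξ₁/2`,
`α_{(1,0)} = ξ₁/2`, and `α_{(i,j)} = 0` whenever `i + j` is odd and `i + j > 1`. -/
theorem symmetry_determines_coefficients (N : ℕ) (α : ℕ → ℕ → ℝ)
    (Abar : ℝ → ℝ → ℝ)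
    (hAbar : ∀ τ σ : ℝ, Abar τ σ =
      ∑ i ∈ Finset.range (N + 1), ∑ j ∈ Finset.range (N + 1),
        α i j * legP i τ * legP j σ)
    (hsym : ∀ τ ∈ Set.Icc (0:ℝ) 1, ∀ σ ∈ Set.Icc (0:ℝ) 1,
        Abar τ σ - Abar (1 - τ) (1 - σ) = τ - σ) :
    α 0 1 = -xi1 / 2 ∧ α 1 0 = xi1 / 2 ∧
      ∀ i j : ℕ, i ≤ N → j ≤ N → Odd (i + j) → 1 < i + j → α i j = 0 := by
  rcases Nat.eq_zero_or_pos N with hN | hN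
  · exfalso
    have h1 := hsym 1 (by norm_num) 0 (by norm_num)
    rw [hAbar, hAbar] at h1
    subst hN
    simp only [zero_add, Finset.sum_range_one, SymAux.legP_zero, mul_one] at h1
    linarith
  set c : ℕ → ℕ → ℝ := fun i j => α i j * (1 - (-1:ℝ)^(i+j)) with hc
  set b : ℝ → ℕ → ℝ := fun σ i => if i = 0 then 1/2 - σ else if i = 1 then xi1 else 0
    with hbdef
  set b' : ℕ → ℕ → ℝ := fun i j =>
    if i = 0 ∧ j = 1 then -xi1 else if i = 1 ∧ j = 0 then xi1 else 0 with hb'def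
  -- the difference as a double legP sum
  have hdiff : ∀ τ σ : ℝ, Abar τ σ - Abar (1-τ) (1-σ)
      = ∑ i ∈ Finset.range (N+1), (∑ j ∈ Finset.range (N+1),
          c i j * legP j σ) * legP i τ := by
    intro τ σ
    rw [hAbar, hAbar, ← Finset.sum_sub_distrib]
    apply Finset.sum_congr rfl; intro i _
    rw [Finset.sum_mul, ← Finset.sum_sub_distrib]
    apply Finset.sum_congr rfl; intro j _
    rw [SymAux.legP_reflect, SymAux.legP_reflect, hc]
    simp only [pow_add]
    ring
  -- the RHS as a legP sum
  have hb : ∀ σ τ : ℝ, ∑ i ∈ Finset.range (N+1), b σ i * legP i τ = τ - σ := by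
    intro σ τ
    have hsub : ({0,1} : Finset ℕ) ⊆ Finset.range (N+1) := by
      intro x hx
      simp only [Finset.mem_insert, Finset.mem_singleton] at hx
      rcases hx with h | h <;> simp [h] <;> omega
    rw [← Finset.sum_subset hsub]
    · rw [Finset.sum_pair (by norm_num)]
      have h1 := SymAux.xi1_legP_one τ
      simp only [hbdef, SymAux.legP_zero, if_pos rfl]
      norm_num
      linarith
    · intro x _ hx
      simp only [Finset.mem_insert, Finset.mem_singleton, not_or] at hx
      simp [hbdef, hx.1, hx.2]
  -- extract coefficients in τ
  have hcoef : ∀ σ ∈ Icc (0:ℝ) 1, ∀ i < N + 1,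
      (∑ j ∈ Finset.range (N+1), c i j * legP j σ) = b σ i := by
    intro σ hσ
    apply SymAux.extract
    intro τ hτ
    rw [← hdiff τ σ, hsym τ hτ σ hσ, hb]
  -- the row target as a legP sum in σ
  have hb' : ∀ i < N + 1, ∀ σ : ℝ,
      ∑ j ∈ Finset.range (N+1), b' i j * legP j σ = b σ i := by
    intro i hi σ
    have hsub : ({0,1} : Finset ℕ) ⊆ Finset.range (N+1) := by
      intro x hx
      simp only [Finset.mem_insert, Finset.mem_singleton] at hx
      rcases hx with h | h <;> simp [h] <;> omega
    rw [← Finset.sum_subset hsub]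
    · rw [Finset.sum_pair (by norm_num)]
      have h1 := SymAux.xi1_legP_one σ
      rcases Nat.lt_or_ge i 2 with h2 | h2
      · interval_cases i <;>
          simp only [hb'def, hbdef, SymAux.legP_zero] <;> norm_num <;> linarith
      · have h0 : i ≠ 0 := by omega
        have h1' : i ≠ 1 := by omega
        simp [hb'def, hbdef, h0, h1']
    · intro x _ hx
      simp only [Finset.mem_insert, Finset.mem_singleton, not_or] at hx
      simp [hb'def, hx.1, hx.2]
  -- extract coefficients in σ
  have hrow : ∀ i < N + 1, ∀ j < N + 1, c i j = b' i j := by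
    intro i hi
    apply SymAux.extract
    intro σ hσ
    rw [hcoef σ hσ i hi, hb' i hi σ]
  have hN1 : (1 : ℕ) < N + 1 := by omega
  have hN0 : (0 : ℕ) < N + 1 := by omega
  refine ⟨?_, ?_, ?_⟩
  · have := hrow 0 hN0 1 hN1
    simp only [hc, hb'def] at this
    norm_num at this
    linarith
  · have := hrow 1 hN1 0 hN0
    simp only [hc, hb'def] at this
    norm_num at this
    linarith
  · intro i j hiN hjN hodd hgt
    have := hrow i (by omega) j (by omega)
    simp only [hc, hb'def] at this
    rw [hodd.neg_one_pow] at this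
    rw [if_neg (by omega : ¬(i = 0 ∧ j = 1)), if_neg (by omega : ¬(i = 1 ∧ j = 0))] at this
    linarith

end
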